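/- Let (X,T) be a minimal Cantor system, A ⊆ X a clopen set, and f ∈ C(X,ℤ) with 0 < [f] < [𝟙_A] in G(X,T). Then there exists a clopen set C ⊆ A such that [𝟙_C] = [f]. -/
import Mathlib


open Set Filter Topology MeasureTheory

/-- A minimal homeomorphism: every two-sided orbit is dense. -/
def IsMinimal {X : Type*} [TopologicalSpace X] (T : X ≃ₜ X) : Prop :=
  ∀ x : X, Dense (Set.range fun n : ℤ => (T.toEquiv ^ n) x)

/-- First return time of `x` to the set `A` under the map `T`. -/
noncomputable def retTime {X : Type*} (T : X → X) (A : Set X) (x : X) : ℕ :=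
  sInf {n : ℕ | 0 < n ∧ T^[n] x ∈ A}

/-- `f` is a `T`-coboundary (with continuous transfer function). -/
def IsCob {X : Type*} [TopologicalSpace X] (T : X → X) (f : X → ℤ) : Prop :=
  ∃ g : X → ℤ, Continuous g ∧ ∀ x, f x = g x - g (T x)

/-- `[f]` is a nonzero positive class in `G(X,T) = C(X,ℤ)/∂_T`. -/
def PosClass {X : Type*} [TopologicalSpace X] (T : X → X) (f : X → ℤ) : Prop :=
  ∃ u : X → ℤ, Continuous u ∧ (∀ x, 0 ≤ u x) ∧ (∃ x, u x ≠ 0) ∧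
    IsCob T (fun x => f x - u x)

/-- The indicator function of a set, with values in `ℤ`. -/
noncomputable def ind {X : Type*} (A : Set X) : X → ℤ := A.indicator fun _ => 1

/-- `[f]` is a nonzero positive class in `G(X,T)/Inf`: `f` is a nonnegative nonzero
continuous function plus a function integrating to zero against every invariant measure. -/
def PosClassInf {X : Type*} [TopologicalSpace X] [MeasurableSpace X]
    (T : X → X) (f : X → ℤ) : Prop :=
  ∃ u k : X → ℤ, Continuous u ∧ (∀ x, 0 ≤ u x) ∧ (∃ x, u x ≠ 0) ∧ Continuous k ∧
    (∀ μ : Measure X, IsProbabilityMeasure μ → Measure.map T μ = μ →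
      ∫ x, (k x : ℝ) ∂μ = 0) ∧
    (∀ x, f x = u x + k x)


section Aux
variable {X : Type*} [TopologicalSpace X]

lemma zpow_natCast_apply (T : X ≃ₜ X) (k : ℕ) (y : X) :
    (T.toEquiv ^ (k : ℤ)) y = (⇑T)^[k] y := by
  rw [zpow_natCast, Equiv.Perm.coe_pow]
  rfl

lemma zpow_negSucc_apply (T : X ≃ₜ X) (k : ℕ) (y : X) :
    (T.toEquiv ^ (Int.negSucc k)) y = (⇑T.symm)^[k + 1] y := by
  rw [zpow_negSucc, ← inv_pow, Equiv.Perm.coe_pow]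
  rfl

lemma cont_zpow (T : X ≃ₜ X) (n : ℤ) : Continuous fun y => (T.toEquiv ^ n) y := by
  cases n with
  | ofNat k =>
      have : (fun y => (T.toEquiv ^ (Int.ofNat k)) y) = (⇑T)^[k] :=
        funext fun y => zpow_natCast_apply T k y
      rw [this]; exact T.continuous.iterate k
  | negSucc k =>
      have : (fun y => (T.toEquiv ^ (Int.negSucc k)) y) = (⇑T.symm)^[k + 1] :=
        funext (zpow_negSucc_apply T k)
      rw [this]; exact T.symm.continuous.iterate (k + 1)

lemma isMinimal_symm (T : X ≃ₜ X) (h : IsMinimal T) : IsMinimal T.symm := by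
  intro x
  have hkey : ∀ n : ℤ, T.symm.toEquiv ^ n = T.toEquiv ^ (-n) := by
    intro n
    have h1 : T.symm.toEquiv = T.toEquiv⁻¹ := rfl
    rw [h1, inv_zpow, ← zpow_neg]
  have hr : (Set.range fun n : ℤ => (T.symm.toEquiv ^ n) x)
      = Set.range fun n : ℤ => (T.toEquiv ^ n) x := by
    ext z
    constructor
    · rintro ⟨n, rfl⟩
      refine ⟨-n, ?_⟩
      show (T.toEquiv ^ (-n)) x = (T.symm.toEquiv ^ n) x
      rw [hkey n]
    · rintro ⟨n, rfl⟩
      refine ⟨-n, ?_⟩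
      show (T.symm.toEquiv ^ (-n)) x = (T.toEquiv ^ n) x
      rw [hkey (-n), neg_neg]
  rw [hr]; exact h x

lemma hitting [CompactSpace X] (T : X ≃ₜ X) (hmin : IsMinimal T)
    (B : Set X) (hB : IsOpen B) (hBne : B.Nonempty) :
    ∃ N : ℕ, ∀ y : X, ∃ n : ℕ, 0 < n ∧ n ≤ N ∧ (⇑T)^[n] y ∈ B := by
  have hcov : (Set.univ : Set X) ⊆ ⋃ n : ℤ, (fun y => (T.toEquiv ^ n) y) ⁻¹' B := by
    intro y _
    obtain ⟨z, hzr, hzB⟩ := (hmin y).exists_mem_open hB hBne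
    obtain ⟨n, rfl⟩ := hzr
    exact Set.mem_iUnion.mpr ⟨n, hzB⟩
  obtain ⟨t, ht⟩ := isCompact_univ.elim_finite_subcover _
    (fun n : ℤ => hB.preimage (cont_zpow T n)) hcov
  set M : ℕ := t.sup fun n => n.natAbs with hM
  refine ⟨2 * M + 1, fun y => ?_⟩
  obtain ⟨n, hnt, hnB⟩ := Set.mem_iUnion₂.mp (ht (Set.mem_univ ((T.toEquiv ^ ((M : ℤ) + 1)) y)))
  have habs : n.natAbs ≤ M := Finset.le_sup hnt
  have hcomp : (T.toEquiv ^ n) ((T.toEquiv ^ ((M : ℤ) + 1)) y)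
      = (T.toEquiv ^ (n + ((M : ℤ) + 1))) y := by
    rw [← Equiv.Perm.mul_apply, ← zpow_add]
  simp only [Set.mem_preimage] at hnB
  rw [hcomp] at hnB
  have habs' : (n.natAbs : ℤ) ≤ (M : ℤ) := by exact_mod_cast habs
  have hk0 : (0 : ℤ) ≤ n + ((M : ℤ) + 1) := by omega
  refine ⟨(n + ((M : ℤ) + 1)).toNat, by omega, by omega, ?_⟩
  have hcast : (((n + ((M : ℤ) + 1)).toNat : ℤ)) = n + ((M : ℤ) + 1) := Int.toNat_of_nonneg hk0
  rw [← zpow_natCast_apply]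
  rw [hcast]
  exact hnB

lemma glue_cont {Z : Type*} [TopologicalSpace Z] {s : X → ℕ} (hs : ∀ n, IsOpen {y | s y = n})
    {F : ℕ → X → Z} (hF : ∀ n, Continuous (F n)) : Continuous fun y => F (s y) y := by
  rw [continuous_def]
  intro U hU
  have hset : (fun y => F (s y) y) ⁻¹' U = ⋃ n, ({y | s y = n} ∩ (F n) ⁻¹' U) := by
    ext y
    simp only [Set.mem_preimage, Set.mem_iUnion, Set.mem_inter_iff, Set.mem_setOf_eq]
    constructor
    · intro hy; exact ⟨s y, rfl, hy⟩
    · rintro ⟨n, hn, hy⟩; rw [hn]; exact hy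
  rw [hset]
  exact isOpen_iUnion fun n => (hs n).inter (hU.preimage (hF n))

lemma sInf_level_open {P : ℕ → X → Prop}
    (hP : ∀ n, IsClopen {y | P n y}) (hne : ∀ y, ∃ n, P n y) (n₀ : ℕ) :
    IsOpen {y | sInf {n | P n y} = n₀} := by
  have hset : {y | sInf {n | P n y} = n₀}
      = {y | P n₀ y} ∩ ⋂ k ∈ Finset.range n₀, {y | P k y}ᶜ := by
    ext y
    simp only [Set.mem_setOf_eq, Set.mem_inter_iff, Set.mem_iInter, Set.mem_compl_iff,
      Finset.mem_range]
    constructor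
    · intro hy
      have hmem : P (sInf {n | P n y}) y := Nat.sInf_mem (hne y)
      rw [hy] at hmem
      exact ⟨hmem, fun k hk => Nat.notMem_of_lt_sInf (by rw [hy]; exact hk)⟩
    · rintro ⟨h₀, hlt⟩
      refine le_antisymm (Nat.sInf_le h₀) ?_
      by_contra hc
      push_neg at hc
      have hmem : P (sInf {n | P n y}) y := Nat.sInf_mem (⟨n₀, h₀⟩ : {n | P n y}.Nonempty)
      exact hlt _ hc hmem
  rw [hset]
  exact (hP n₀).isOpen.inter (isOpen_biInter_finset fun k _ => (hP k).compl.isOpen)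

lemma cont_ind {S : Set X} (hS : IsClopen S) : Continuous (ind S) := by
  classical
  have h1 : ind S = fun y => if y ∈ S then (1 : ℤ) else 0 :=
    funext fun y => Set.indicator_apply _ _ _
  rw [h1]
  refine Continuous.if ?_ continuous_const continuous_const
  intro a ha
  have : frontier {a | a ∈ S} = (∅ : Set X) := hS.frontier_eq
  rw [this] at ha
  exact absurd ha (Set.notMem_empty a)

lemma ind_of_mem {S : Set X} {z : X} (hz : z ∈ S) : ind S z = 1 :=
  Set.indicator_of_mem hz _

lemma ind_of_not_mem {S : Set X} {z : X} (hz : z ∉ S) : ind S z = 0 :=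
  Set.indicator_of_notMem hz _

end Aux


theorem stmt7 {X : Type*} [MetricSpace X] [CompactSpace X] [PerfectSpace X]
    [TotallyDisconnectedSpace X]
    (T : X ≃ₜ X) (hmin : IsMinimal T)
    (A : Set X) (hA : IsClopen A)
    (f : X → ℤ) (hf : Continuous f)
    (hfpos : PosClass (⇑T) f) (hAf : PosClass (⇑T) (fun x => ind A x - f x)) :
    ∃ C : Set X, C ⊆ A ∧ IsClopen C ∧ IsCob (⇑T) (fun x => ind C x - f x) := by
  classical
  rcases isEmpty_or_nonempty X with hX | hX
  · exact ⟨∅, by simp, isClopen_empty, ⟨fun _ => 0, continuous_const,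
      fun x => (hX.false x).elim⟩⟩
  obtain ⟨v, hvc, hv0, -, g₂, hg₂c, hg₂⟩ := hfpos
  obtain ⟨u, huc, hu0, -, g₁, hg₁c, hg₁⟩ := hAf
  set g : X → ℤ := fun x => g₁ x + g₂ x with hg_def
  have hgc : Continuous g := hg₁c.add hg₂c
  have hg : ∀ x, ind A x - v x - u x = g x - g (T x) := by
    intro x
    have e1 : ind A x - f x - u x = g₁ x - g₁ (T x) := hg₁ x
    have e2 : f x - v x = g₂ x - g₂ (T x) := hg₂ x
    simp only [hg_def]
    linarith
  obtain ⟨x₀⟩ := hX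
  set B : Set X := g ⁻¹' {g x₀} with hB_def
  have hBclopen : IsClopen B := (isClopen_discrete _).preimage hgc
  have hBne : B.Nonempty := ⟨x₀, rfl⟩
  have hgB : ∀ x, x ∈ B → g x = g x₀ := fun x hx => hx
  obtain ⟨Nf, hNf⟩ := hitting T hmin B hBclopen.isOpen hBne
  obtain ⟨Nb, hNb⟩ := hitting T.symm (isMinimal_symm T hmin) B hBclopen.isOpen hBne
  set hgt : X → ℕ := fun y => retTime (⇑T) B y with hgt_def
  have hret_ne : ∀ y, {n : ℕ | 0 < n ∧ (⇑T)^[n] y ∈ B}.Nonempty := fun y => by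
    obtain ⟨n, hn1, -, hnB⟩ := hNf y; exact ⟨n, hn1, hnB⟩
  have hhgt_mem : ∀ y, 0 < hgt y ∧ (⇑T)^[hgt y] y ∈ B := fun y => Nat.sInf_mem (hret_ne y)
  have hhgt_min : ∀ y k, 0 < k → k < hgt y → (⇑T)^[k] y ∉ B := fun y k hk hkh hB' =>
    Nat.notMem_of_lt_sInf hkh ⟨hk, hB'⟩
  set ent : X → ℕ := fun y => sInf {k : ℕ | (⇑T.symm)^[k] y ∈ B} with hent_def
  have hent_ne : ∀ y, {k : ℕ | (⇑T.symm)^[k] y ∈ B}.Nonempty := fun y => by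
    obtain ⟨n, -, -, hnB⟩ := hNb y; exact ⟨n, hnB⟩
  have hent_mem : ∀ y, (⇑T.symm)^[ent y] y ∈ B := fun y => Nat.sInf_mem (hent_ne y)
  have hent_min : ∀ y k, k < ent y → (⇑T.symm)^[k] y ∉ B := fun y k hk hB' =>
    Nat.notMem_of_lt_sInf hk hB'
  set bse : X → X := fun y => (⇑T.symm)^[ent y] y with hbse_def
  have hbseB : ∀ y, bse y ∈ B := fun y => hent_mem y
  have hTS : ∀ (k : ℕ) (z : X), (⇑T)^[k] ((⇑T.symm)^[k] z) = z := fun k z =>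
    Function.LeftInverse.iterate T.apply_symm_apply k z
  have hST : ∀ (k : ℕ) (z : X), (⇑T.symm)^[k] ((⇑T)^[k] z) = z := fun k z =>
    Function.LeftInverse.iterate T.symm_apply_apply k z
  have hiter1 : ∀ (k m : ℕ), k ≤ m → ∀ y,
      (⇑T)^[k] ((⇑T.symm)^[m] y) = (⇑T.symm)^[m - k] y := by
    intro k m hkm y
    have hsplit : (⇑T.symm)^[m] y = (⇑T.symm)^[k] ((⇑T.symm)^[m - k] y) := by
      rw [← Function.iterate_add_apply]
      congr 1
      omega
    rw [hsplit, hTS]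
  have hiter2 : ∀ (k m : ℕ), k ≤ m → ∀ y,
      (⇑T.symm)^[k] ((⇑T)^[m] y) = (⇑T)^[m - k] y := by
    intro k m hkm y
    have hsplit : (⇑T)^[m] y = (⇑T)^[k] ((⇑T)^[m - k] y) := by
      rw [← Function.iterate_add_apply]
      congr 1
      omega
    rw [hsplit, hST]
  have hbse_ret : ∀ y, (⇑T)^[ent y] (bse y) = y := fun y => hTS (ent y) y
  have hF2 : ∀ y, ent y < hgt (bse y) := by
    intro y
    by_contra hcon
    push_neg at hcon
    have h1 := (hhgt_mem (bse y)).1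
    have h2 := (hhgt_mem (bse y)).2
    have he : (⇑T)^[hgt (bse y)] (bse y) = (⇑T.symm)^[ent y - hgt (bse y)] y :=
      hiter1 _ _ hcon y
    rw [he] at h2
    exact hent_min y _ (by omega) h2
  have hF1 : ∀ x, x ∈ B → ∀ i, i < hgt x → ent ((⇑T)^[i] x) = i := by
    intro x hx i hi
    have hmem : (⇑T.symm)^[i] ((⇑T)^[i] x) ∈ B := by rw [hST]; exact hx
    have hle : ent ((⇑T)^[i] x) ≤ i := Nat.sInf_le hmem
    rcases lt_or_eq_of_le hle with hlt | heq
    · exfalso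
      have hm := hent_mem ((⇑T)^[i] x)
      have he : (⇑T.symm)^[ent ((⇑T)^[i] x)] ((⇑T)^[i] x)
          = (⇑T)^[i - ent ((⇑T)^[i] x)] x := hiter2 _ _ (le_of_lt hlt) x
      rw [he] at hm
      exact hhgt_min x _ (by omega) (by omega) hm
    · exact heq
  have hbse_lvl : ∀ x, x ∈ B → ∀ i, i < hgt x → bse ((⇑T)^[i] x) = x := by
    intro x hx i hi
    show (⇑T.symm)^[ent ((⇑T)^[i] x)] ((⇑T)^[i] x) = x
    rw [hF1 x hx i hi, hST]
  have hF3a : ∀ y, T y ∈ B → ent y + 1 = hgt (bse y) := by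
    intro y hTy
    have h1 : (⇑T)^[ent y + 1] (bse y) = T y := by
      rw [Function.iterate_succ_apply', hbse_ret]
    have hle : hgt (bse y) ≤ ent y + 1 :=
      Nat.sInf_le ⟨Nat.succ_pos _, by rw [h1]; exact hTy⟩
    have := hF2 y
    omega
  have hF3b : ∀ y, T y ∉ B → ent (T y) = ent y + 1 := by
    intro y hTy
    have hmem : (⇑T.symm)^[ent y + 1] (T y) ∈ B := by
      rw [Function.iterate_succ_apply, T.symm_apply_apply]
      exact hent_mem y
    have hle : ent (T y) ≤ ent y + 1 := Nat.sInf_le hmem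
    rcases lt_or_eq_of_le hle with hlt | heq
    · exfalso
      have hm := hent_mem (T y)
      rcases Nat.eq_zero_or_pos (ent (T y)) with h0 | hpos
      · rw [h0, Function.iterate_zero_apply] at hm
        exact hTy hm
      · obtain ⟨k, hk⟩ := Nat.exists_eq_succ_of_ne_zero (Nat.pos_iff_ne_zero.mp hpos)
        rw [hk, Function.iterate_succ_apply, T.symm_apply_apply] at hm
        exact hent_min y k (by omega) hm
    · exact heq
  have hF3c : ∀ y, T y ∉ B → bse (T y) = bse y := by
    intro y hTy
    show (⇑T.symm)^[ent (T y)] (T y) = (⇑T.symm)^[ent y] y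
    rw [hF3b y hTy, Function.iterate_succ_apply, T.symm_apply_apply]
  set aC : X → ℕ → ℤ := fun x j => ∑ i ∈ Finset.range j, ind A ((⇑T)^[i] x) with haC_def
  set Vs : X → ℤ := fun x => ∑ i ∈ Finset.range (hgt x), v ((⇑T)^[i] x) with hVs_def
  have hVs0 : ∀ x, 0 ≤ Vs x := fun x => Finset.sum_nonneg fun i _ => hv0 _
  have hS1 : ∀ x, x ∈ B → Vs x ≤ aC x (hgt x) := by
    intro x hx
    have htel : ∑ i ∈ Finset.range (hgt x), (g ((⇑T)^[i] x) - g ((⇑T)^[i + 1] x))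
        = g ((⇑T)^[0] x) - g ((⇑T)^[hgt x] x) :=
      Finset.sum_range_sub' (fun i => g ((⇑T)^[i] x)) (hgt x)
    have hterm : ∀ i, ind A ((⇑T)^[i] x) - v ((⇑T)^[i] x) - u ((⇑T)^[i] x)
        = g ((⇑T)^[i] x) - g ((⇑T)^[i + 1] x) := by
      intro i
      rw [Function.iterate_succ_apply']
      exact hg _
    have hsum : ∑ i ∈ Finset.range (hgt x),
        (ind A ((⇑T)^[i] x) - v ((⇑T)^[i] x) - u ((⇑T)^[i] x)) = 0 := by
      rw [Finset.sum_congr rfl fun i _ => hterm i, htel, Function.iterate_zero_apply,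
        hgB x hx, hgB _ (hhgt_mem x).2, sub_self]
    have hU : 0 ≤ ∑ i ∈ Finset.range (hgt x), u ((⇑T)^[i] x) :=
      Finset.sum_nonneg fun i _ => hu0 _
    rw [Finset.sum_sub_distrib, Finset.sum_sub_distrib] at hsum
    have hVsx : Vs x = ∑ i ∈ Finset.range (hgt x), v ((⇑T)^[i] x) := rfl
    have haCx : aC x (hgt x) = ∑ i ∈ Finset.range (hgt x), ind A ((⇑T)^[i] x) := rfl
    rw [hVsx, haCx]
    linarith
  set ψ : X → ℤ := fun y => aC (bse y) (ent y) - Vs (bse y) with hψ_def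
  set C : Set X := A ∩ {y | ψ y < 0} with hC_def
  have hlev_hgt : ∀ n, IsOpen {y | hgt y = n} := by
    intro n
    have hP : ∀ m, IsClopen {y | 0 < m ∧ (⇑T)^[m] y ∈ B} := by
      intro m
      rcases Nat.eq_zero_or_pos m with rfl | hm
      · convert isClopen_empty
        ext y; simp
      · have hs : {y | 0 < m ∧ (⇑T)^[m] y ∈ B} = (⇑T)^[m] ⁻¹' B := by
          ext y; simp [hm]
        rw [hs]
        exact hBclopen.preimage (T.continuous.iterate m)
    exact sInf_level_open hP (fun y => hret_ne y) n
  have hlev_ent : ∀ n, IsOpen {y | ent y = n} := by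
    intro n
    have hP : ∀ m, IsClopen {y | (⇑T.symm)^[m] y ∈ B} :=
      fun m => hBclopen.preimage (T.symm.continuous.iterate m)
    exact sInf_level_open hP (fun y => hent_ne y) n
  have hindA_cont : Continuous (ind A) := cont_ind hA
  have haC_cont : ∀ j, Continuous fun y => aC y j := fun j =>
    continuous_finset_sum _ fun i _ => hindA_cont.comp (T.continuous.iterate i)
  have hVs_cont : Continuous Vs :=
    glue_cont (F := fun n z => ∑ i ∈ Finset.range n, v ((⇑T)^[i] z)) hlev_hgt
      (fun n => continuous_finset_sum _ fun i _ => hvc.comp (T.continuous.iterate i))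
  have hψ_cont : Continuous ψ :=
    glue_cont (F := fun n z => aC ((⇑T.symm)^[n] z) n - Vs ((⇑T.symm)^[n] z)) hlev_ent
      (fun n => ((haC_cont n).comp (T.symm.continuous.iterate n)).sub
        (hVs_cont.comp (T.symm.continuous.iterate n)))
  have hCclopen : IsClopen C :=
    hA.inter ((isClopen_discrete {z : ℤ | z < 0}).preimage hψ_cont)
  have hS2 : ∀ x, x ∈ B → ∑ i ∈ Finset.range (hgt x), ind C ((⇑T)^[i] x) = Vs x := by
    intro x hx
    have hφ : ∀ i ∈ Finset.range (hgt x), ind C ((⇑T)^[i] x)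
        = min (aC x (i + 1)) (Vs x) - min (aC x i) (Vs x) := by
      intro i hi
      rw [Finset.mem_range] at hi
      have hent_i : ent ((⇑T)^[i] x) = i := hF1 x hx i hi
      have hbse_i : bse ((⇑T)^[i] x) = x := hbse_lvl x hx i hi
      have hψ_i : ψ ((⇑T)^[i] x) = aC x i - Vs x := by
        show aC (bse ((⇑T)^[i] x)) (ent ((⇑T)^[i] x)) - Vs (bse ((⇑T)^[i] x))
          = aC x i - Vs x
        rw [hent_i, hbse_i]
      have hstep : aC x (i + 1) = aC x i + ind A ((⇑T)^[i] x) :=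
        Finset.sum_range_succ _ i
      by_cases hAm : (⇑T)^[i] x ∈ A
      · have hA1 : ind A ((⇑T)^[i] x) = 1 := ind_of_mem hAm
        by_cases hlt : aC x i < Vs x
        · have hCm : (⇑T)^[i] x ∈ C :=
            ⟨hAm, show ψ ((⇑T)^[i] x) < 0 by rw [hψ_i]; omega⟩
          rw [ind_of_mem hCm, hstep, hA1,
            min_eq_left (by omega : aC x i + 1 ≤ Vs x),
            min_eq_left (by omega : aC x i ≤ Vs x)]
          omega
        · have hCn : (⇑T)^[i] x ∉ C := by
            rintro ⟨-, hψlt⟩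
            have : ψ ((⇑T)^[i] x) < 0 := hψlt
            rw [hψ_i] at this
            omega
          rw [ind_of_not_mem hCn, hstep, hA1,
            min_eq_right (by omega : Vs x ≤ aC x i + 1),
            min_eq_right (by omega : Vs x ≤ aC x i)]
          omega
      · have hA0 : ind A ((⇑T)^[i] x) = 0 := ind_of_not_mem hAm
        have hCn : (⇑T)^[i] x ∉ C := fun hc => hAm hc.1
        rw [ind_of_not_mem hCn, hstep, hA0]
        omega
    rw [Finset.sum_congr rfl hφ,
      Finset.sum_range_sub (fun j => min (aC x j) (Vs x)) (hgt x)]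
    have h0 : aC x 0 = 0 := by
      show ∑ i ∈ Finset.range 0, ind A ((⇑T)^[i] x) = 0
      simp
    have h1 : Vs x ≤ aC x (hgt x) := hS1 x hx
    rw [h0, min_eq_right h1, min_eq_left (hVs0 x), sub_zero]
  set w : X → ℤ := fun z => ind C z - v z with hw_def
  have hw_cont : Continuous w := (cont_ind hCclopen).sub hvc
  set G : X → ℤ := fun y => ∑ i ∈ Finset.range (ent y), w ((⇑T)^[i] (bse y)) with hG_def
  have hG_cont : Continuous G :=
    glue_cont (F := fun n z => ∑ i ∈ Finset.range n, w ((⇑T)^[i] ((⇑T.symm)^[n] z)))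
      hlev_ent
      (fun n => continuous_finset_sum _ fun i _ =>
        hw_cont.comp ((T.continuous.iterate i).comp (T.symm.continuous.iterate n)))
  have hwsum : ∀ x, x ∈ B → ∑ i ∈ Finset.range (hgt x), w ((⇑T)^[i] x) = 0 := by
    intro x hx
    have : ∑ i ∈ Finset.range (hgt x), w ((⇑T)^[i] x)
        = (∑ i ∈ Finset.range (hgt x), ind C ((⇑T)^[i] x))
          - ∑ i ∈ Finset.range (hgt x), v ((⇑T)^[i] x) := by
      rw [← Finset.sum_sub_distrib]
    rw [this, hS2 x hx]
    have hVsx : Vs x = ∑ i ∈ Finset.range (hgt x), v ((⇑T)^[i] x) := rfl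
    rw [← hVsx, sub_self]
  have hKey : ∀ y, w y = G (T y) - G y := by
    intro y
    by_cases hTy : T y ∈ B
    · have hent0 : ent (T y) = 0 :=
        Nat.sInf_eq_zero.mpr (Or.inl (by simpa using hTy))
      have hGT0 : G (T y) = 0 := by
        show ∑ i ∈ Finset.range (ent (T y)), w ((⇑T)^[i] (bse (T y))) = 0
        rw [hent0]
        simp
      have hsum : ∑ i ∈ Finset.range (ent y + 1), w ((⇑T)^[i] (bse y)) = G y + w y := by
        rw [Finset.sum_range_succ, hbse_ret y]
      have hzero : ∑ i ∈ Finset.range (ent y + 1), w ((⇑T)^[i] (bse y)) = 0 := by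
        rw [hF3a y hTy]
        exact hwsum (bse y) (hbseB y)
      rw [hGT0]
      linarith
    · have hent' : ent (T y) = ent y + 1 := hF3b y hTy
      have hbse' : bse (T y) = bse y := hF3c y hTy
      have hGT : G (T y) = ∑ i ∈ Finset.range (ent y + 1), w ((⇑T)^[i] (bse y)) := by
        show ∑ i ∈ Finset.range (ent (T y)), w ((⇑T)^[i] (bse (T y))) = _
        rw [hent', hbse']
      rw [hGT, Finset.sum_range_succ, hbse_ret y]
      ring
  refine ⟨C, Set.inter_subset_left, hCclopen, ?_⟩
  refine ⟨fun y => -G y - g₂ y, (hG_cont.neg).sub hg₂c, ?_⟩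
  intro x
  have h1 : ind C x - v x = G (T x) - G x := hKey x
  have h2 : f x - v x = g₂ x - g₂ (T x) := hg₂ x
  show ind C x - f x = (-G x - g₂ x) - (-G (T x) - g₂ (T x))
  linarith
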